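/- If all vertex weights are positive integers and every edge weight γ_e is set equal to y−1, then V(G, ω; x, γ_e = y−1) = (y−1)^{|V(G)|} · W(G, ω; x/(y−1), y), where W is the Noble–Welsh W-polynomial. -/
import Mathlib


open Finset

structure WGraph (S : Type) (L : Type) where
  V : Type
  E : Type
  [fV : Fintype V]
  [dV : DecidableEq V]
  [fE : Fintype E]
  [dE : DecidableEq E]
  ends : E → V × V
  ω : V → S
  γ : E → L

attribute [instance] WGraph.fV WGraph.dV WGraph.fE WGraph.dE

namespace WGraph
variable {S L : Type}

def IsLoop (G : WGraph S L) (e : G.E) : Prop := (G.ends e).1 = (G.ends e).2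

def delete (G : WGraph S L) (e₀ : G.E) : WGraph S L where
  V := G.V
  E := {e : G.E // e ≠ e₀}
  ends := fun e => G.ends e.1
  ω := G.ω
  γ := fun e => G.γ e.1

def contract [Add S] (G : WGraph S L) (e₀ : G.E) (h : ¬ G.IsLoop e₀) : WGraph S L where
  V := {v : G.V // v ≠ (G.ends e₀).2}
  E := {e : G.E // e ≠ e₀}
  ends := fun e =>
    ((if hv : (G.ends e.1).1 = (G.ends e₀).2 then ⟨(G.ends e₀).1, h⟩
        else ⟨(G.ends e.1).1, hv⟩ : {v : G.V // v ≠ (G.ends e₀).2}),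
     (if hv : (G.ends e.1).2 = (G.ends e₀).2 then ⟨(G.ends e₀).1, h⟩
        else ⟨(G.ends e.1).2, hv⟩))
  ω := fun v =>
    if v.1 = (G.ends e₀).1 then G.ω (G.ends e₀).1 + G.ω (G.ends e₀).2 else G.ω v.1
  γ := fun e => G.γ e.1

def mapEdges {L' : Type} (G : WGraph S L) (φ : L → L') : WGraph S L' where
  V := G.V
  E := G.E
  ends := G.ends
  ω := G.ω
  γ := φ ∘ G.γ

def stateGraph (G : WGraph S L) (A : Finset G.E) : SimpleGraph G.V :=
  SimpleGraph.fromRel (fun v w => ∃ e ∈ A, G.ends e = (v, w))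

noncomputable instance (G : WGraph S L) (A : Finset G.E) :
    Fintype (G.stateGraph A).ConnectedComponent := Fintype.ofFinite _

noncomputable def kcomp (G : WGraph S L) (A : Finset G.E) : ℕ :=
  Fintype.card (G.stateGraph A).ConnectedComponent

open scoped Classical in
noncomputable def compWeight [AddCommMonoid S] (G : WGraph S L) (A : Finset G.E)
    (c : (G.stateGraph A).ConnectedComponent) : S :=
  ∑ v ∈ Finset.univ.filter (fun v => (G.stateGraph A).connectedComponentMk v = c), G.ω v

end WGraph

/-- setting every edge weight of the V-polynomial equal to `y - 1` recovers the
Noble–Welsh W-polynomial:  `V(G,ω;x,γ_e = y-1) = (y-1)^{|V(G)|} W(G,ω; x/(y-1), y)`. -/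
theorem V_specializes_to_W {R : Type} [Field R] (x : ℕ+ → R) (y : R) (hy : y ≠ 1)
    (Vpoly : WGraph ℕ+ R → R) (W : WGraph ℕ+ Unit → R)
    (hV1 : ∀ (G : WGraph ℕ+ R) (e : G.E) (h : ¬ G.IsLoop e),
      Vpoly G = Vpoly (G.delete e) + G.γ e * Vpoly (G.contract e h))
    (hV2 : ∀ (G : WGraph ℕ+ R) (e : G.E), G.IsLoop e →
      Vpoly G = (G.γ e + 1) * Vpoly (G.delete e))
    (hV3 : ∀ G : WGraph ℕ+ R, IsEmpty G.E → Vpoly G = ∏ v : G.V, x (G.ω v))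
    (hW1 : ∀ (G : WGraph ℕ+ Unit) (e : G.E) (h : ¬ G.IsLoop e),
      W G = W (G.delete e) + W (G.contract e h))
    (hW2 : ∀ (G : WGraph ℕ+ Unit) (e : G.E), G.IsLoop e → W G = y * W (G.delete e))
    (hW3 : ∀ G : WGraph ℕ+ Unit, IsEmpty G.E →
      W G = ∏ v : G.V, (x (G.ω v) / (y - 1))) :
    ∀ G : WGraph ℕ+ Unit,
      Vpoly (G.mapEdges (fun _ => y - 1)) = (y - 1) ^ (Fintype.card G.V) * W G := by
  suffices H : ∀ (n : ℕ) (G : WGraph ℕ+ Unit), Fintype.card G.E = n →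
      Vpoly (G.mapEdges (fun _ => y - 1)) = (y - 1) ^ (Fintype.card G.V) * W G by
    intro G; exact H _ G rfl
  have hy' : (y - 1) ≠ 0 := sub_ne_zero.2 hy
  intro n
  induction n using Nat.strong_induction_on with
  | _ n IH =>
    intro G hn
    by_cases hE : IsEmpty G.E
    · rw [hV3 (G.mapEdges (fun _ => y - 1)) hE, hW3 G hE]
      show (∏ v : G.V, x (G.ω v)) = (y - 1) ^ (Fintype.card G.V) * ∏ v : G.V, (x (G.ω v) / (y - 1))
      rw [Finset.prod_div_distrib, Finset.prod_const, Finset.card_univ, mul_comm,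
        div_mul_cancel₀ _ (pow_ne_zero _ hy')]
    · obtain ⟨e⟩ := not_isEmpty_iff.mp hE
      have hcard : Fintype.card {e' : G.E // e' ≠ e} < n := by
        rw [← hn]; exact Fintype.card_subtype_lt (x := e) (fun h => h rfl)
      by_cases hloop : G.IsLoop e
      · have h1 := hV2 (G.mapEdges (fun _ => y - 1)) e hloop
        have hγ : (G.mapEdges (fun _ => y - 1)).γ e = y - 1 := rfl
        have hde : Vpoly ((G.mapEdges (fun _ => y - 1)).delete e)
            = (y - 1) ^ (Fintype.card G.V) * W (G.delete e) :=
          IH _ hcard (G.delete e) rfl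
        rw [h1, hγ, hde, hW2 G e hloop, sub_add_cancel]
        ring
      · have h1 := hV1 (G.mapEdges (fun _ => y - 1)) e hloop
        have hγ : (G.mapEdges (fun _ => y - 1)).γ e = y - 1 := rfl
        have hde : Vpoly ((G.mapEdges (fun _ => y - 1)).delete e)
            = (y - 1) ^ (Fintype.card G.V) * W (G.delete e) :=
          IH _ hcard (G.delete e) rfl
        have hco : Vpoly ((G.mapEdges (fun _ => y - 1)).contract e hloop)
            = (y - 1) ^ (Fintype.card (G.contract e hloop).V) * W (G.contract e hloop) :=
          IH _ hcard (G.contract e hloop) rfl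
        have hcV : Fintype.card (G.contract e hloop).V = Fintype.card G.V - 1 := by
          show Fintype.card {v : G.V // v ≠ (G.ends e).2} = _
          rw [Fintype.card_subtype_compl, Fintype.card_subtype_eq]
        have hVpos : 0 < Fintype.card G.V := Fintype.card_pos_iff.mpr ⟨(G.ends e).2⟩
        obtain ⟨k, hk⟩ : ∃ k, Fintype.card G.V = k + 1 :=
          ⟨Fintype.card G.V - 1, (Nat.succ_pred_eq_of_pos hVpos).symm⟩
        rw [h1, hγ, hde, hco, hW1 G e hloop, hcV, hk]
        simp only [Nat.add_sub_cancel]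
        ring
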